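/- Let w = 2^c and z be an integer multiple of w. Define the tiled set T = ∪_{x,y ∈ {0,...,z/w-1}} {(z1 + xw, z2 + yw) : (z1,z2) ∈ C_w}, where C_w is the Van der Corput set. Then any axis-parallel integer rectangle contained in [0,z]×[0,z] that contains no point of T has area strictly less than 4w. -/

import Mathlib

/-- Bit-reversing function. -/
def bitRev (c z : ℕ) : ℕ := ∑ i ∈ Finset.range c, (z / 2 ^ i % 2) * 2 ^ (c - 1 - i)

lemma sum_two_pow (n : ℕ) : ∑ i ∈ Finset.range n, 2 ^ i = 2 ^ n - 1 := by
  induction n with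
  | zero => simp
  | succ n ih => rw [Finset.sum_range_succ, ih]; have := Nat.one_le_two_pow (n := n); omega

lemma bitRev_lt (c z : ℕ) : bitRev c z < 2 ^ c := by
  have h : bitRev c z ≤ ∑ i ∈ Finset.range c, 2 ^ (c - 1 - i) := by
    apply Finset.sum_le_sum
    intro i _
    have h1 : z / 2 ^ i % 2 ≤ 1 := by omega
    calc z / 2 ^ i % 2 * 2 ^ (c - 1 - i) ≤ 1 * 2 ^ (c - 1 - i) :=
          Nat.mul_le_mul_right _ h1
      _ = 2 ^ (c - 1 - i) := one_mul _
  have h2 : ∑ i ∈ Finset.range c, 2 ^ (c - 1 - i) = 2 ^ c - 1 := by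
    rw [Finset.sum_range_reflect (fun i => 2 ^ i) c, sum_two_pow]
  have := Nat.one_le_two_pow (n := c)
  omega

lemma bitRev_split (c j s t : ℕ) (hj : j ≤ c) (ht : t < 2 ^ j) :
    bitRev c (s * 2 ^ j + t) = 2 ^ (c - j) * bitRev j t + bitRev (c - j) s := by
  obtain ⟨k, rfl⟩ : ∃ k, c = j + k := ⟨c - j, by omega⟩
  simp only [Nat.add_sub_cancel_left]
  unfold bitRev
  rw [Finset.sum_range_add, Finset.mul_sum]
  congr 1
  · apply Finset.sum_congr rfl
    intro i hi
    simp only [Finset.mem_range] at hi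
    have e1 : s * 2 ^ j = 2 ^ i * (s * 2 ^ (j - i - 1) * 2) := by
      rw [mul_comm (2 ^ i), mul_assoc, mul_assoc, ← pow_succ', ← pow_add]
      congr 2
      omega
    have e2 : (s * 2 ^ j + t) / 2 ^ i % 2 = t / 2 ^ i % 2 := by
      rw [e1, Nat.mul_add_div (Nat.two_pow_pos i), mul_comm (s * 2 ^ (j - i - 1)) 2,
        Nat.mul_add_mod]
    rw [e2]
    have e3 : 2 ^ (j + k - 1 - i) = 2 ^ k * 2 ^ (j - 1 - i) := by
      rw [← pow_add]; congr 1; omega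
    rw [e3]; ring
  · apply Finset.sum_congr rfl
    intro i hi
    simp only [Finset.mem_range] at hi
    have e1 : (s * 2 ^ j + t) / 2 ^ (j + i) = s / 2 ^ i := by
      rw [pow_add, ← Nat.div_div_eq_div_mul, mul_comm s, Nat.mul_add_div (Nat.two_pow_pos j),
        Nat.div_eq_of_lt ht, add_zero]
    rw [e1]
    congr 2
    omega

lemma bitRev_one (t : ℕ) (ht : t < 2) : bitRev 1 t = t := by
  simp [bitRev]
  omega

lemma bitRev_bitRev (c z : ℕ) (hz : z < 2 ^ c) : bitRev c (bitRev c z) = z := by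
  induction c generalizing z with
  | zero => simp [bitRev]; omega
  | succ n ih =>
    have hz2 : z / 2 < 2 ^ n := by
      have : (2:ℕ) ^ (n+1) = 2 * 2 ^ n := by ring
      omega
    have hzm : z % 2 < 2 := Nat.mod_lt _ (by norm_num)
    have h1 : bitRev (n+1) z = z % 2 * 2 ^ n + bitRev n (z / 2) := by
      conv_lhs => rw [show z = z / 2 * 2 ^ 1 + z % 2 by omega]
      rw [bitRev_split (n+1) 1 (z/2) (z%2) (by omega) (by simpa using hzm)]
      rw [show n + 1 - 1 = n from rfl, bitRev_one _ hzm]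
      ring
    rw [h1, bitRev_split (n+1) n (z % 2) (bitRev n (z/2)) (by omega) (bitRev_lt n _)]
    rw [show n + 1 - n = 1 by omega, ih _ hz2, bitRev_one _ hzm]
    omega

lemma exists_cong (d r g : ℕ) (hd : 0 < d) (hr : r < d) :
    ∃ m, g ≤ m ∧ m < g + d ∧ m % d = r := by
  have hdm := Nat.div_add_mod g d
  have hml : g % d < d := Nat.mod_lt _ hd
  rcases le_or_gt (g % d) r with h | h
  · refine ⟨d * (g / d) + r, ?_, ?_, ?_⟩
    · omega
    · omega
    · rw [Nat.mul_add_mod, Nat.mod_eq_of_lt hr]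
  · have h2 : d * (g / d + 1) = d * (g / d) + d := by ring
    refine ⟨d * (g / d + 1) + r, ?_, ?_, ?_⟩
    · omega
    · omega
    · rw [Nat.mul_add_mod, Nat.mod_eq_of_lt hr]

/-- Tiling the Van der Corput set `C_w` (with `w = 2^c`) over a `z × z` square,
where `w ∣ z`: any axis-parallel integer rectangle inside `[0,z]×[0,z]` containing
no point of the tiled set `T` has area strictly less than `4w`. -/
theorem tiled_vdc_empty_rectangle_area (c z α β γ η : ℕ) (hc : 0 < c) (hz : 0 < z)
    (hdvd : 2 ^ c ∣ z) (hβ : β ≤ z) (hη : η ≤ z)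
    (hempty : ∀ x y q : ℕ, x < z / 2 ^ c → y < z / 2 ^ c → q < 2 ^ c →
      ¬(α ≤ q + x * 2 ^ c ∧ q + x * 2 ^ c < β ∧
        γ ≤ bitRev c q + y * 2 ^ c ∧ bitRev c q + y * 2 ^ c < η)) :
    (β - α) * (η - γ) < 4 * 2 ^ c := by
  by_contra hcon
  push_neg at hcon
  have hw : 0 < 2 ^ c := Nat.two_pow_pos c
  have ha : 0 < β - α := by
    rcases Nat.eq_zero_or_pos (β - α) with h | h
    · rw [h, zero_mul] at hcon; omega
    · exact h
  have hb : 0 < η - γ := by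
    rcases Nat.eq_zero_or_pos (η - γ) with h | h
    · rw [h, mul_zero] at hcon; omega
    · exact h
  have key : ∀ n m : ℕ, α ≤ n → n < β → γ ≤ m → m < η →
      bitRev c (n % 2 ^ c) = m % 2 ^ c → False := by
    intro n m h1 h2 h3 h4 h5
    refine hempty (n / 2 ^ c) (m / 2 ^ c) (n % 2 ^ c)
      (Nat.div_lt_div_of_lt_of_dvd hdvd (by omega))
      (Nat.div_lt_div_of_lt_of_dvd hdvd (by omega))
      (Nat.mod_lt _ hw) ⟨?_, ?_, ?_, ?_⟩
    · rw [Nat.mod_add_div']; exact h1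
    · rw [Nat.mod_add_div']; exact h2
    · rw [h5, Nat.mod_add_div']; exact h3
    · rw [h5, Nat.mod_add_div']; exact h4
  rcases le_or_gt (2 ^ c) (β - α) with hA | hA
  · obtain ⟨n, hn1, hn2, hn3⟩ :=
      exists_cong (2 ^ c) (bitRev c (γ % 2 ^ c)) α hw (bitRev_lt _ _)
    exact key n γ hn1 (by omega) le_rfl (by omega)
      (by rw [hn3, bitRev_bitRev c _ (Nat.mod_lt _ hw)])
  rcases le_or_gt (2 ^ c) (η - γ) with hB | hB
  · obtain ⟨m, hm1, hm2, hm3⟩ :=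
      exists_cong (2 ^ c) (bitRev c (α % 2 ^ c)) γ hw (bitRev_lt _ _)
    exact key α m le_rfl (by omega) hm1 (by omega) hm3.symm
  -- main case: both sides shorter than 2^c
  have hL1 : 2 ^ 1 ≤ (β - α) + 1 := by omega
  set L := Nat.log 2 ((β - α) + 1) with hLdef
  have hLpos : 1 ≤ L := by
    rw [hLdef]
    exact (Nat.le_log_iff_pow_le (by norm_num) (by omega)).mpr hL1
  set j := L - 1 with hjdef
  have hjL : j + 1 = L := by omega
  have p1 : 2 ^ (j + 1) ≤ (β - α) + 1 := by
    rw [hjL]; exact Nat.pow_log_le_self 2 (by omega)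
  have p2 : (β - α) + 1 < 2 ^ (j + 2) := by
    have := Nat.lt_pow_succ_log_self (by norm_num : 1 < 2) ((β - α) + 1)
    rw [← hLdef] at this
    have e : j + 2 = L + 1 := by omega
    rw [e]; exact this
  have hjc : j + 1 ≤ c := by
    have h1 : 2 ^ (j + 1) ≤ 2 ^ c := by omega
    exact (Nat.pow_le_pow_iff_right (by norm_num : 1 < 2)).mp h1
  have hjpos : 0 < (2:ℕ) ^ j := Nat.two_pow_pos j
  have hcj : 0 < (2:ℕ) ^ (c - j) := Nat.two_pow_pos (c - j)
  have ecc : 2 ^ (c - j) * 2 ^ j = 2 ^ c := by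
    rw [← pow_add]; congr 1; omega
  -- height bound
  have hbgt : 2 ^ (c - j) < η - γ := by
    by_contra hle
    push_neg at hle
    have e1 : 2 ^ (j + 2) * 2 ^ (c - j) = 4 * 2 ^ c := by
      rw [← pow_add, show j + 2 + (c - j) = c + 2 by omega, pow_add]
      ring
    have h3 : (β - α) * (η - γ) ≤ (2 ^ (j + 2) - 1) * 2 ^ (c - j) :=
      Nat.mul_le_mul (by omega) hle
    have h4 : (2 ^ (j + 2) - 1) * 2 ^ (c - j) + 2 ^ (c - j) = 2 ^ (j + 2) * 2 ^ (c - j) := by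
      rw [Nat.sub_mul]
      have : 2 ^ (c - j) ≤ 2 ^ (j + 2) * 2 ^ (c - j) :=
        Nat.le_mul_of_pos_left _ (Nat.two_pow_pos _)
      omega
    omega
  -- aligned block in x
  set s := (α + 2 ^ j - 1) / 2 ^ j with hsdef
  have hsd := Nat.div_add_mod (α + 2 ^ j - 1) (2 ^ j)
  have hsm : (α + 2 ^ j - 1) % 2 ^ j < 2 ^ j := Nat.mod_lt _ hjpos
  have e2j : (2:ℕ) ^ (j + 1) = 2 * 2 ^ j := by ring
  rw [← hsdef] at hsd
  have hblock1 : α ≤ 2 ^ j * s := by omega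
  have hblock2 : 2 ^ j * s + 2 ^ j ≤ β := by omega
  -- choose m
  obtain ⟨m, hm1, hm2, hm3⟩ :=
    exists_cong (2 ^ (c - j)) (bitRev (c - j) (s % 2 ^ (c - j))) γ hcj (bitRev_lt _ _)
  have hmη : m < η := by omega
  have hvlt : m % 2 ^ c < 2 ^ c := Nat.mod_lt _ hw
  have huj : m % 2 ^ c / 2 ^ (c - j) < 2 ^ j := by
    rw [Nat.div_lt_iff_lt_mul hcj, mul_comm]
    rw [ecc]; exact hvlt
  set t := bitRev j (m % 2 ^ c / 2 ^ (c - j)) with htdef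
  have htj : t < 2 ^ j := bitRev_lt _ _
  -- the point n
  have hsplit := Nat.div_add_mod s (2 ^ (c - j))
  have hsmod : s % 2 ^ (c - j) < 2 ^ (c - j) := Nat.mod_lt _ hcj
  have hnform : s * 2 ^ j + t = s / 2 ^ (c - j) * 2 ^ c + (s % 2 ^ (c - j) * 2 ^ j + t) := by
    conv_lhs => rw [show s = 2 ^ (c - j) * (s / 2 ^ (c - j)) + s % 2 ^ (c - j) from hsplit.symm]
    rw [add_mul, ← ecc]
    ring
  have hinner : s % 2 ^ (c - j) * 2 ^ j + t < 2 ^ c := by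
    have h2 : s % 2 ^ (c - j) * 2 ^ j ≤ (2 ^ (c - j) - 1) * 2 ^ j :=
      Nat.mul_le_mul_right _ (by omega)
    have e3 : (2 ^ (c - j) - 1) * 2 ^ j + 2 ^ j = 2 ^ c := by
      rw [Nat.sub_mul, one_mul, ← ecc]
      have : 2 ^ j ≤ 2 ^ (c - j) * 2 ^ j := Nat.le_mul_of_pos_left _ hcj
      omega
    omega
  have hmodn : (s * 2 ^ j + t) % 2 ^ c = s % 2 ^ (c - j) * 2 ^ j + t := by
    rw [hnform, mul_comm (s / 2 ^ (c - j)) (2 ^ c), Nat.mul_add_mod, Nat.mod_eq_of_lt hinner]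
  have hbit : bitRev c ((s * 2 ^ j + t) % 2 ^ c) = m % 2 ^ c := by
    rw [hmodn, bitRev_split c j _ t (by omega) htj, htdef,
      bitRev_bitRev j _ huj]
    have h1 : m % 2 ^ c % 2 ^ (c - j) = bitRev (c - j) (s % 2 ^ (c - j)) := by
      rw [Nat.mod_mod_of_dvd m (pow_dvd_pow 2 (by omega))]
      exact hm3
    have h2 := Nat.div_add_mod (m % 2 ^ c) (2 ^ (c - j))
    omega
  have hcomm : s * 2 ^ j = 2 ^ j * s := mul_comm _ _
  exact key (s * 2 ^ j + t) m (by omega) (by omega) hm1 hmη hbit
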